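/- Let θ ∈ (0, π/2), let A be an n×n real matrix, and let P be a symmetric positive definite n×n real matrix such that the 2n×2n block matrix N_θ(A, P) = [[sin θ·(AP + PAᵀ), cos θ·(AP − PAᵀ)],[cos θ·(PAᵀ − AP), sin θ·(AP + PAᵀ)]] is negative definite. Then every complex eigenvalue λ of A (i.e., every λ ∈ ℂ with det(λI − A) = 0, A regarded as a complex matrix) satisfies Re λ < 0 and cos θ·|Im λ| < sin θ·|Re λ|; that is, λ lies in the open conic sector in the left half-plane with apex at the origin and inner angle 2θ. -/

import Mathlib

open Matrix

/-- A real matrix is negative definite (in the quadratic-form sense):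
`xᵀ M x < 0` for all nonzero real vectors `x`. -/
def Matrix.NegDefR {ι : Type*} [Fintype ι] (M : Matrix ι ι ℝ) : Prop :=
  ∀ x : ι → ℝ, x ≠ 0 → x ⬝ᵥ M *ᵥ x < 0

/-- A real matrix is positive definite (in the quadratic-form sense):
`xᵀ M x > 0` for all nonzero real vectors `x`. -/
def Matrix.PosDefR {ι : Type*} [Fintype ι] (M : Matrix ι ι ℝ) : Prop :=
  ∀ x : ι → ℝ, x ≠ 0 → 0 < x ⬝ᵥ M *ᵥ x

lemma key_ineq {n : ℕ} (θ : ℝ) (hs : 0 < Real.sin θ) (hc : 0 < Real.cos θ)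
    (A P : Matrix (Fin n) (Fin n) ℝ)
    (hPsymm : Pᵀ = P) (hPpd : P.PosDefR)
    (hN : (fromBlocks
        (Real.sin θ • (A * P + P * Aᵀ)) (Real.cos θ • (A * P - P * Aᵀ))
        (Real.cos θ • (P * Aᵀ - A * P)) (Real.sin θ • (A * P + P * Aᵀ))).NegDefR)
    (a b : ℝ) (x y : Fin n → ℝ) (hxy : ¬(x = 0 ∧ y = 0))
    (h1 : Aᵀ *ᵥ x = a • x - b • y) (h2 : Aᵀ *ᵥ y = b • x + a • y) :
    Real.sin θ * a - Real.cos θ * b < 0 := by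
  have hdA : ∀ u v : Fin n → ℝ, u ⬝ᵥ (A *ᵥ v) = (Aᵀ *ᵥ u) ⬝ᵥ v := by
    intro u v
    rw [dotProduct_mulVec, mulVec_transpose]
  have hz : Sum.elim x y ≠ 0 := by
    intro h
    apply hxy
    constructor <;> funext i
    · exact congrFun h (Sum.inl i)
    · exact congrFun h (Sum.inr i)
  have hq := hN (Sum.elim x y) hz
  have hsymP : ∀ u v : Fin n → ℝ, u ⬝ᵥ (P *ᵥ v) = v ⬝ᵥ (P *ᵥ u) := by
    intro u v
    rw [dotProduct_mulVec, ← mulVec_transpose, hPsymm, dotProduct_comm]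
  set p11 := x ⬝ᵥ (P *ᵥ x) with hp11
  set p22 := y ⬝ᵥ (P *ᵥ y) with hp22
  set p12 := x ⬝ᵥ (P *ᵥ y) with hp12
  have e1 : x ⬝ᵥ ((A * P) *ᵥ x) = a * p11 - b * p12 := by
    rw [← mulVec_mulVec, hdA, h1]
    simp [sub_dotProduct, smul_dotProduct, hsymP y x]
    try ring
  have e2 : y ⬝ᵥ ((A * P) *ᵥ y) = b * p12 + a * p22 := by
    rw [← mulVec_mulVec, hdA, h2]
    simp [add_dotProduct, smul_dotProduct, hp12, hp22, hsymP x y]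
    try ring
  have e3 : x ⬝ᵥ ((P * Aᵀ) *ᵥ x) = a * p11 - b * p12 := by
    rw [← mulVec_mulVec, h1]
    simp [mulVec_sub, mulVec_smul, dotProduct_sub, dotProduct_smul]
    try ring
  have e4 : y ⬝ᵥ ((P * Aᵀ) *ᵥ y) = b * p12 + a * p22 := by
    rw [← mulVec_mulVec, h2]
    simp [mulVec_add, mulVec_smul, dotProduct_add, dotProduct_smul, hsymP y x]
    try ring
  have e5 : x ⬝ᵥ ((A * P) *ᵥ y) = a * p12 - b * p22 := by
    rw [← mulVec_mulVec, hdA, h1]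
    simp [sub_dotProduct, smul_dotProduct, hp12, hp22]
    try ring
  have e6 : x ⬝ᵥ ((P * Aᵀ) *ᵥ y) = b * p11 + a * p12 := by
    rw [← mulVec_mulVec, h2]
    simp [mulVec_add, mulVec_smul, dotProduct_add, dotProduct_smul, hp11, hp12]
    try ring
  have e7 : y ⬝ᵥ ((A * P) *ᵥ x) = b * p11 + a * p12 := by
    rw [← mulVec_mulVec, hdA, h2]
    simp [add_dotProduct, smul_dotProduct, hp11, hsymP y x, hp12]
    try ring
  have e8 : y ⬝ᵥ ((P * Aᵀ) *ᵥ x) = a * p12 - b * p22 := by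
    rw [← mulVec_mulVec, h1]
    simp [mulVec_sub, mulVec_smul, dotProduct_sub, dotProduct_smul, hsymP y x, hp12, hp22]
    try ring
  have hqval : Sum.elim x y ⬝ᵥ ((fromBlocks
        (Real.sin θ • (A * P + P * Aᵀ)) (Real.cos θ • (A * P - P * Aᵀ))
        (Real.cos θ • (P * Aᵀ - A * P)) (Real.sin θ • (A * P + P * Aᵀ))) *ᵥ Sum.elim x y)
      = 2 * (Real.sin θ * a - Real.cos θ * b) * (p11 + p22) := by
    rw [fromBlocks_mulVec]
    simp only [Sum.elim_comp_inl, Sum.elim_comp_inr, sumElim_dotProduct_sumElim,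
      smul_mulVec, add_mulVec, sub_mulVec, dotProduct_add, dotProduct_sub,
      dotProduct_smul, smul_eq_mul]
    rw [e1, e2, e3, e4, e5, e6, e7, e8]
    ring
  rw [hqval] at hq
  have hp : 0 < p11 + p22 := by
    rcases Classical.em (x = 0) with hx | hx
    · have hy : y ≠ 0 := fun h => hxy ⟨hx, h⟩
      have : p11 = 0 := by simp [hp11, hx]
      have := hPpd y hy
      linarith
    · have h1 := hPpd x hx
      rcases Classical.em (y = 0) with hy | hy
      · have : p22 = 0 := by simp [hp22, hy]
        linarith
      · have := hPpd y hy
        linarith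
  nlinarith

/-- If `P` is symmetric positive definite and the conic-sector LMI matrix
`N_θ(A, P) = [[sin θ·(AP + PAᵀ), cos θ·(AP − PAᵀ)],[cos θ·(PAᵀ − AP), sin θ·(AP + PAᵀ)]]`
is negative definite, then every complex eigenvalue `λ` of `A` satisfies `Re λ < 0` and
`cos θ·|Im λ| < sin θ·|Re λ|`. -/
theorem stmt_8 (n : ℕ) (θ : ℝ) (hθ₁ : 0 < θ) (hθ₂ : θ < Real.pi / 2)
    (A P : Matrix (Fin n) (Fin n) ℝ)
    (hPsymm : Pᵀ = P) (hPpd : P.PosDefR)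
    (hN : (fromBlocks
        (Real.sin θ • (A * P + P * Aᵀ)) (Real.cos θ • (A * P - P * Aᵀ))
        (Real.cos θ • (P * Aᵀ - A * P)) (Real.sin θ • (A * P + P * Aᵀ))).NegDefR) :
    ∀ lam : ℂ,
      (lam • (1 : Matrix (Fin n) (Fin n) ℂ) - A.map Complex.ofReal).det = 0 →
      lam.re < 0 ∧ Real.cos θ * |lam.im| < Real.sin θ * |lam.re| := by
  intro lam hdet
  have hs : 0 < Real.sin θ := Real.sin_pos_of_pos_of_lt_pi hθ₁ (by linarith [Real.pi_gt_three])
  have hc : 0 < Real.cos θ := Real.cos_pos_of_mem_Ioo ⟨by linarith [Real.pi_gt_three], hθ₂⟩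
  -- pass to transpose
  have hdetT : (lam • (1 : Matrix (Fin n) (Fin n) ℂ) - Aᵀ.map Complex.ofReal).det = 0 := by
    rw [← Matrix.det_transpose]
    convert hdet using 2
    rw [Matrix.transpose_sub, Matrix.transpose_smul, Matrix.transpose_one, Matrix.transpose_map]
    simp
  obtain ⟨w, hw, hker⟩ := Matrix.exists_mulVec_eq_zero_iff.mpr hdetT
  have heig : (Aᵀ.map Complex.ofReal) *ᵥ w = lam • w := by
    have := hker
    rw [Matrix.sub_mulVec, sub_eq_zero, Matrix.smul_mulVec, Matrix.one_mulVec] at this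
    exact this.symm
  set a := lam.re
  set b := lam.im
  set x : Fin n → ℝ := fun i => (w i).re with hx
  set y : Fin n → ℝ := fun i => (w i).im with hy
  have h1 : Aᵀ *ᵥ x = a • x - b • y := by
    funext i
    have := congrArg Complex.re (congrFun heig i)
    simpa [Matrix.mulVec, dotProduct, Complex.re_sum, Complex.mul_re,
      Pi.sub_apply, Pi.smul_apply, smul_eq_mul, Finset.sum_sub_distrib,
      Finset.mul_sum] using this
  have h2 : Aᵀ *ᵥ y = b • x + a • y := by
    funext i
    have hh := congrArg Complex.im (congrFun heig i)
    have h' : ∑ j, A j i * (w j).im = a * (w i).im + b * (w i).re := by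
      simpa [Matrix.mulVec, dotProduct, Complex.im_sum, Complex.mul_im,
        Pi.add_apply, Pi.smul_apply, smul_eq_mul, Finset.sum_add_distrib,
        Finset.mul_sum] using hh
    simp only [Matrix.mulVec, dotProduct, Pi.add_apply, Pi.smul_apply,
      smul_eq_mul, Matrix.transpose_apply, hx, hy]
    linarith [h']
  have hxy : ¬(x = 0 ∧ y = 0) := by
    rintro ⟨hx0, hy0⟩
    apply hw
    funext i
    have h1 : (w i).re = 0 := congrFun hx0 i
    have h2 : (w i).im = 0 := congrFun hy0 i
    exact Complex.ext h1 h2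
  have hxy' : ¬(x = 0 ∧ (-y) = 0) := by
    rintro ⟨hx0, hy0⟩
    exact hxy ⟨hx0, by simpa using hy0⟩
  have hk1 := key_ineq θ hs hc A P hPsymm hPpd hN a b x y hxy h1 h2
  have h1' : Aᵀ *ᵥ x = a • x - (-b) • (-y) := by rw [h1]; module
  have h2' : Aᵀ *ᵥ (-y) = (-b) • x + a • (-y) := by
    rw [Matrix.mulVec_neg, h2]; module
  have hk2 := key_ineq θ hs hc A P hPsymm hPpd hN a (-b) x (-y) hxy' h1' h2'
  constructor
  · nlinarith
  · rcases abs_cases b with ⟨hb, _⟩ | ⟨hb, _⟩ <;> rcases abs_cases a with ⟨ha, _⟩ | ⟨ha, _⟩ <;>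
      rw [hb, ha] <;> nlinarith
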